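/- For every real α > -1 and integers 1 ≤ k ≤ n, the diagonal entries of the matrix A_n are a_{k,k} = k/(α+1), and consequently the trace of A_n equals n(n+1)/(2(α+1)). -/

import Mathlib

/-- `β_j = (Γ(j+α)/Γ(j))^{1/2}`. -/
noncomputable def lagBeta (α : ℝ) (j : ℕ) : ℝ :=
  Real.sqrt (Real.Gamma (j + α) / Real.Gamma j)

/-- The entries `a_{k,i} = (∑_{j=1}^{min(k,i)} β_j²)/(β_{k+1} β_{i+1})` of the matrix `A_n`. -/
noncomputable def lagEntry (α : ℝ) (k i : ℕ) : ℝ :=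
  (∑ j ∈ Finset.Icc 1 (min k i), (lagBeta α j) ^ 2) / (lagBeta α (k + 1) * lagBeta α (i + 1))

lemma lagBeta_sq (α : ℝ) (hα : -1 < α) (j : ℕ) (hj : 1 ≤ j) :
    lagBeta α j ^ 2 = Real.Gamma (j + α) / Real.Gamma j := by
  have hj1 : (1:ℝ) ≤ (j:ℝ) := by exact_mod_cast hj
  have h1 : 0 < (j:ℝ) + α := by linarith
  have h2 : 0 < (j:ℝ) := by linarith
  have g1 := Real.Gamma_pos_of_pos h1
  have g2 := Real.Gamma_pos_of_pos h2
  rw [lagBeta, Real.sq_sqrt (le_of_lt (div_pos g1 g2))]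

lemma sum_lagBeta (α : ℝ) (hα : -1 < α) :
    ∀ k : ℕ, 1 ≤ k → ∑ j ∈ Finset.Icc 1 k, lagBeta α j ^ 2 =
      Real.Gamma (k + 1 + α) / ((α + 1) * Real.Gamma k) := by
  intro k hk
  induction k, hk using Nat.le_induction with
  | base =>
    simp only [Finset.Icc_self, Finset.sum_singleton]
    rw [lagBeta_sq α hα 1 le_rfl]
    have h1 : (1:ℝ) + 1 + α = (1 + α) + 1 := by ring
    have h2 : (1:ℝ) + α ≠ 0 := by linarith
    have h2' : α + 1 ≠ 0 := by linarith
    push_cast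
    rw [h1, Real.Gamma_add_one h2, Real.Gamma_one, div_one, mul_one,
      show (1:ℝ) + α = α + 1 from by ring, mul_comm, mul_div_assoc,
      div_self h2', mul_one]
  | succ k hk ih =>
    rw [Finset.sum_Icc_succ_top (by omega : 1 ≤ k + 1), ih,
      lagBeta_sq α hα (k + 1) (by omega)]
    have hk1 : (1:ℝ) ≤ (k:ℝ) := by exact_mod_cast hk
    have hkα : (0:ℝ) < (k:ℝ) + 1 + α := by linarith
    have hΓk : 0 < Real.Gamma k := Real.Gamma_pos_of_pos (by linarith)
    have hΓk1 : Real.Gamma ((k:ℝ) + 1) = k * Real.Gamma k :=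
      Real.Gamma_add_one (by linarith)
    have hΓkα : Real.Gamma ((k:ℝ) + 1 + 1 + α) = ((k:ℝ) + 1 + α) * Real.Gamma ((k:ℝ) + 1 + α) := by
      have : (k:ℝ) + 1 + 1 + α = ((k:ℝ) + 1 + α) + 1 := by ring
      rw [this, Real.Gamma_add_one (by linarith)]
    have hα1 : α + 1 ≠ 0 := by linarith
    push_cast
    rw [hΓkα, hΓk1]
    field_simp
    ring

lemma gauss_sum_real (n : ℕ) : ∑ k ∈ Finset.Icc 1 n, (k:ℝ) = n * (n + 1) / 2 := by
  induction n with
  | zero => simp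
  | succ m ih =>
    rw [Finset.sum_Icc_succ_top (by omega : 1 ≤ m + 1), ih]
    push_cast
    ring

theorem diag_and_trace (α : ℝ) (hα : -1 < α) (n : ℕ) (hn : 1 ≤ n) :
    (∀ k : ℕ, 1 ≤ k → k ≤ n → lagEntry α k k = k / (α + 1)) ∧
    ∑ k ∈ Finset.Icc 1 n, lagEntry α k k = n * (n + 1) / (2 * (α + 1)) := by
  have hdiag : ∀ k : ℕ, 1 ≤ k → lagEntry α k k = k / (α + 1) := by
    intro k hk
    have hk1 : (1:ℝ) ≤ (k:ℝ) := by exact_mod_cast hk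
    have hsq : lagBeta α (k+1) * lagBeta α (k+1) = lagBeta α (k+1) ^ 2 := by ring
    rw [lagEntry, min_self, hsq, lagBeta_sq α hα (k+1) (by omega), sum_lagBeta α hα k hk]
    have hΓk : 0 < Real.Gamma k := Real.Gamma_pos_of_pos (by linarith)
    have hΓkα : 0 < Real.Gamma ((k:ℝ) + 1 + α) := Real.Gamma_pos_of_pos (by linarith)
    have hΓk1 : Real.Gamma ((k:ℝ) + 1) = k * Real.Gamma k :=
      Real.Gamma_add_one (by linarith)
    have hα1 : α + 1 ≠ 0 := by linarith
    push_cast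
    rw [hΓk1]
    field_simp
  refine ⟨fun k hk _ => hdiag k hk, ?_⟩
  have hsum2 : ∑ k ∈ Finset.Icc 1 n, lagEntry α k k
      = ∑ k ∈ Finset.Icc 1 n, (k:ℝ) / (α + 1) :=
    Finset.sum_congr rfl fun k hk => hdiag k (Finset.mem_Icc.mp hk).1
  rw [hsum2]
  rw [← Finset.sum_div]
  rw [gauss_sum_real]
  field_simp
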